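/- In the K_4-bootstrap percolation process, if K_1 and K_2 are vertex sets each inducing a clique in G_t and |K_1 ∩ K_2| ≥ 2, then K_1 ∪ K_2 induces a clique in G_{t+1}. -/

import Mathlib

/-- One step of the `K_r`-bootstrap percolation process: we add every edge `uv` for which
there is an `r`-element vertex set `S` containing `u` and `v` such that every edge within `S`
other than `uv` is already present. -/
def bootStep {V : Type*} (r : ℕ) (G : SimpleGraph V) : SimpleGraph V where
  Adj u v := G.Adj u v ∨ (u ≠ v ∧ ∃ S : Finset V, S.card = r ∧ u ∈ S ∧ v ∈ S ∧
    ∀ x ∈ S, ∀ y ∈ S, x ≠ y → ¬((x = u ∧ y = v) ∨ (x = v ∧ y = u)) → G.Adj x y)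
  symm := by
    constructor
    intro a b h
    rcases h with h | ⟨hne, S, hS, ha, hb, hall⟩
    · exact Or.inl h.symm
    · refine Or.inr ⟨hne.symm, S, hS, hb, ha, ?_⟩
      intro x hx y hy hxy hno
      exact hall x hx y hy hxy (by tauto)
  loopless := by
    constructor
    intro a h
    rcases h with h | ⟨hne, _⟩
    · exact G.irrefl h
    · exact hne rfl

private lemma mixed_adj {V : Type*} [DecidableEq V] (H : SimpleGraph V) (K₁ K₂ : Finset V)
    (h₁ : H.IsClique (K₁ : Set V)) (h₂ : H.IsClique (K₂ : Set V))
    (hint : 2 ≤ (K₁ ∩ K₂).card) {u v : V}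
    (hu1 : u ∈ K₁) (hu2 : u ∉ K₂) (hv2 : v ∈ K₂) (hv1 : v ∉ K₁) (huv : u ≠ v) :
    (bootStep 4 H).Adj u v := by
  obtain ⟨a, ha, b, hb, hab⟩ := Finset.one_lt_card.mp hint
  rw [Finset.mem_inter] at ha hb
  obtain ⟨ha1, ha2⟩ := ha
  obtain ⟨hb1, hb2⟩ := hb
  have hua : u ≠ a := fun h => hu2 (h ▸ ha2)
  have hub : u ≠ b := fun h => hu2 (h ▸ hb2)
  have hva : v ≠ a := fun h => hv1 (h ▸ ha1)
  have hvb : v ≠ b := fun h => hv1 (h ▸ hb1)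
  refine Or.inr ⟨huv, {u, v, a, b}, ?_, by simp, by simp, ?_⟩
  · rw [Finset.card_insert_of_notMem (by simp [huv, hua, hub]),
      Finset.card_insert_of_notMem (by simp [hva, hvb]),
      Finset.card_insert_of_notMem (by simp [hab]), Finset.card_singleton]
  · have Aua : H.Adj u a := h₁ hu1 ha1 hua
    have Aub : H.Adj u b := h₁ hu1 hb1 hub
    have Aab : H.Adj a b := h₁ ha1 hb1 hab
    have Ava : H.Adj v a := h₂ hv2 ha2 hva
    have Avb : H.Adj v b := h₂ hv2 hb2 hvb
    intro x hx y hy hxy hno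
    simp only [Finset.mem_insert, Finset.mem_singleton] at hx hy
    rcases hx with hx | hx | hx | hx <;> rcases hy with hy | hy | hy | hy <;>
      rw [hx, hy] at hxy hno ⊢ <;>
      first
        | exact (hxy rfl).elim
        | exact (hno (Or.inl ⟨rfl, rfl⟩)).elim
        | exact (hno (Or.inr ⟨rfl, rfl⟩)).elim
        | exact Aua | exact Aua.symm | exact Aub | exact Aub.symm
        | exact Aab | exact Aab.symm | exact Ava | exact Ava.symm
        | exact Avb | exact Avb.symm

/-- If `K₁` and `K₂` each induce cliques in `G_t` in the `K_4`-bootstrap process and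
`|K₁ ∩ K₂| ≥ 2`, then `K₁ ∪ K₂` induces a clique in `G_{t+1}`. -/
theorem clique_merge {V : Type*} [DecidableEq V] (G : SimpleGraph V) (t : ℕ)
    (K₁ K₂ : Finset V)
    (h₁ : ((bootStep 4)^[t] G).IsClique (K₁ : Set V))
    (h₂ : ((bootStep 4)^[t] G).IsClique (K₂ : Set V))
    (hint : 2 ≤ (K₁ ∩ K₂).card) :
    ((bootStep 4)^[t + 1] G).IsClique ((K₁ ∪ K₂ : Finset V) : Set V) := by
  rw [Function.iterate_succ_apply']
  set H := (bootStep 4)^[t] G with hH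
  intro u hu v hv huv
  simp only [Finset.coe_union, Set.mem_union, Finset.mem_coe] at hu hv
  have mono : ∀ {x y : V}, H.Adj x y → (bootStep 4 H).Adj x y := fun h => Or.inl h
  by_cases hu1 : u ∈ K₁ <;> by_cases hu2 : u ∈ K₂ <;>
    by_cases hv1 : v ∈ K₁ <;> by_cases hv2 : v ∈ K₂
  all_goals first
    | exact mono (h₁ hu1 hv1 huv)
    | exact mono (h₂ hu2 hv2 huv)
    | exact mixed_adj H K₁ K₂ h₁ h₂ hint hu1 hu2 hv2 hv1 huv
    | exact (mixed_adj H K₁ K₂ h₁ h₂ hint hv1 hv2 hu2 hu1 huv.symm).symm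
    | tauto
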